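/- Let n = 30, β = 2π/30, and A_j = exp(iβj) ∈ ℂ (indices modulo 30) the vertices of the regular 30-gon inscribed in the unit circle. Then the three diagonals A_0A_4, A_1A_5, and A_3A_26 are concurrent: there exists a point of ℂ lying on all three lines. Equivalently, the intersection point φ_4(A_1) = (cos(4β/2)/cos(β/2))·exp(i·3β/2)·exp(iβ) of the consecutive 4-th diagonals A_0A_4 and A_1A_5 lies on the line through A_3 and A_26. (This sporadic extra incidence is why K(30;4,6), K(30;4,7), K(30;6,7) fail to be (90_4) configurations.) -/

import Mathlib

open Real

private lemma line_aux (z w : ℂ) (hw : w ≠ 0)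
    (h : (starRingEnd ℂ) z * w = z * (starRingEnd ℂ) w) :
    ∃ t : ℝ, z = (t : ℂ) * w := by
  refine ⟨(z / w).re, ?_⟩
  have hcw : (starRingEnd ℂ) w ≠ 0 := by simpa using hw
  have h2 : (starRingEnd ℂ) (z / w) = z / w := by
    rw [map_div₀, div_eq_div_iff hcw hw]
    linear_combination h
  rw [Complex.conj_eq_iff_re] at h2
  rw [h2, div_mul_cancel₀ _ hw]

/-- in the regular 30-gon the three diagonals
`A 0 A 4`, `A 1 A 5` and `A 3 A 26` are concurrent:
some point of ℂ lies on all three lines.  (Sporadic extra incidence behind K(30;4,6), K(30;4,7), K(30;6,7).) -/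
theorem stmt_9 (β : ℝ) (hβ : β = 2 * π / 30)
    (A : ℤ → ℂ) (hA : ∀ j : ℤ, A j = Complex.exp ((β * j : ℝ) * Complex.I)) :
    ∃ p : ℂ,
      (∃ t : ℝ, p = A 0 + t • (A 4 - A 0)) ∧
      (∃ t : ℝ, p = A 1 + t • (A 5 - A 1)) ∧
      (∃ t : ℝ, p = A 3 + t • (A 26 - A 3)) := by
  set ω : ℂ := Complex.exp ((π / 30 : ℝ) * Complex.I) with hω
  have hω0 : ω ≠ 0 := Complex.exp_ne_zero _
  have hωk : ∀ k : ℕ, ω ^ k = Complex.exp (((k * (π / 30) : ℝ)) * Complex.I) := by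
    intro k
    rw [hω, ← Complex.exp_nat_mul]
    congr 1
    push_cast
    ring
  have h1 : ω ^ 60 = 1 := by
    rw [hωk, show ((((60:ℕ):ℝ) * (π / 30) : ℝ) : ℂ) * Complex.I = 2 * ↑π * Complex.I by
      push_cast; ring, Complex.exp_two_pi_mul_I]
  have hne : ∀ k : ℕ, 0 < k → k < 60 → ω ^ k ≠ 1 := by
    intro k hk0 hk60 h
    rw [hωk, Complex.exp_eq_one_iff] at h
    obtain ⟨n, hn⟩ := h
    have hI : Complex.I ≠ 0 := Complex.I_ne_zero
    have h2 : ((k * (π / 30) : ℝ) : ℂ) = ((n * (2 * π) : ℝ) : ℂ) := by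
      apply mul_right_cancel₀ hI
      rw [hn]; push_cast; ring
    have h3 : (k : ℝ) * (π / 30) = n * (2 * π) := by exact_mod_cast h2
    have h5 : ((k : ℝ) - 60 * n) * π = 0 := by linear_combination 30 * h3
    rcases mul_eq_zero.mp h5 with h6 | h6
    · have h7 : (k : ℝ) = 60 * n := by linarith
      have h8 : (k : ℤ) = 60 * n := by exact_mod_cast h7
      omega
    · exact Real.pi_ne_zero h6
  have h30 : ω ^ 30 = -1 := by
    rw [hωk, show ((((30:ℕ):ℝ) * (π / 30) : ℝ) : ℂ) * Complex.I = ↑π * Complex.I by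
      push_cast; ring, Complex.exp_pi_mul_I]
  have hS : ω ^ 20 - ω ^ 10 + 1 = 0 := by
    have hkey : (ω ^ 10 + 1) * (ω ^ 20 - ω ^ 10 + 1) = 0 := by linear_combination h30
    rcases mul_eq_zero.mp hkey with h | h
    · exfalso
      apply hne 20 (by norm_num) (by norm_num)
      linear_combination (ω ^ 10 - 1) * h
    · exact h
  have hT : ω ^ 48 + ω ^ 36 + ω ^ 24 + ω ^ 12 + 1 = 0 := by
    have hkey : (ω ^ 12 - 1) * (ω ^ 48 + ω ^ 36 + ω ^ 24 + ω ^ 12 + 1) = 0 := by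
      linear_combination h1
    rcases mul_eq_zero.mp hkey with h | h
    · exfalso
      exact hne 12 (by norm_num) (by norm_num) (by linear_combination h)
    · exact h
  have hcj : ∀ k m : ℕ, k + m = 60 → (starRingEnd ℂ) (ω ^ k) = ω ^ m := by
    intro k m hkm
    have habs : ‖ω ^ k‖ = 1 := by
      rw [norm_pow, hω, Complex.norm_exp_ofReal_mul_I, one_pow]
    have e1 : (starRingEnd ℂ) (ω ^ k) * ω ^ k = 1 := by
      rw [mul_comm, Complex.mul_conj, Complex.normSq_eq_norm_sq, habs]
      norm_num
    have e2 : ω ^ m * ω ^ k = 1 := by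
      rw [← pow_add, show m + k = 60 by omega, h1]
    exact mul_right_cancel₀ (pow_ne_zero k hω0) (e1.trans e2.symm)
  have hd : ω + ω ^ 59 ≠ 0 := by
    have hrepr : ω + ω ^ 59 = ((2 * Real.cos (π / 30) : ℝ) : ℂ) := by
      have := hcj 1 59 (by norm_num)
      rw [pow_one] at this
      rw [← this, Complex.add_conj, hω, Complex.exp_ofReal_mul_I_re]
    rw [hrepr]
    have hc : 0 < Real.cos (π / 30) :=
      Real.cos_pos_of_mem_Ioo ⟨by linarith [Real.pi_pos], by linarith [Real.pi_pos]⟩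
    exact_mod_cast ne_of_gt (by linarith : (0 : ℝ) < 2 * Real.cos (π / 30))
  have hβ15 : β = π / 15 := by rw [hβ]; ring
  have hAv : ∀ (j : ℤ) (k : ℕ), (k : ℤ) = 2 * j → A j = ω ^ k := by
    intro j k hk
    rw [hA, hωk]
    congr 2
    have hkr : (k : ℝ) = 2 * j := by exact_mod_cast hk
    rw [hβ15, hkr]
    ring
  have hA0 : A 0 = ω ^ 0 := hAv 0 0 (by norm_num)
  have hA4 : A 4 = ω ^ 8 := hAv 4 8 (by norm_num)
  have hA1 : A 1 = ω ^ 2 := hAv 1 2 (by norm_num)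
  have hA5 : A 5 = ω ^ 10 := hAv 5 10 (by norm_num)
  have hA3 : A 3 = ω ^ 6 := hAv 3 6 (by norm_num)
  have hA26 : A 26 = ω ^ 52 := hAv 26 52 (by norm_num)
  have hsub : ∀ x y : ℂ, x / (ω + ω ^ 59) - y = (x - y * (ω + ω ^ 59)) / (ω + ω ^ 59) := by
    intro x y
    rw [eq_div_iff hd, sub_mul, div_mul_cancel₀ _ hd]
  set p : ℂ := (ω ^ 9 + ω) / (ω + ω ^ 59) with hp
  have hcp : (starRingEnd ℂ) p = (ω ^ 51 + ω ^ 59) / (ω + ω ^ 59) := by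
    have hc1 : (starRingEnd ℂ) ω = ω ^ 59 := by
      have := hcj 1 59 (by norm_num); rwa [pow_one] at this
    rw [hp, map_div₀, map_add, map_add, hc1, hcj 9 51 (by norm_num), hcj 59 1 (by norm_num),
      pow_one]
    ring_nf
  have key04 : (ω^51 + ω^59 - ω^0 * (ω + ω^59)) * (ω^8 - ω^0)
      = (ω^9 + ω - ω^0 * (ω + ω^59)) * (ω^52 - ω^0) := by
    linear_combination (1*ω^51 + (-1)*ω) * h1
  have key15 : (ω^51 + ω^59 - ω^58 * (ω + ω^59)) * (ω^10 - ω^2)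
      = (ω^9 + ω - ω^2 * (ω + ω^59)) * (ω^50 - ω^58) := by
    linear_combination ((-1)*ω^67 + 1*ω^51) * h1
  have key326 : (ω^51 + ω^59 - ω^54 * (ω + ω^59)) * (ω^52 - ω^6)
      = (ω^9 + ω - ω^6 * (ω + ω^59)) * (ω^8 - ω^54) := by
    linear_combination (1*ω^71 + (-2)*ω^69 + 2*ω^67 + (-2)*ω^65 + 1*ω^63 + 2*ω^61 + (-3)*ω^59 + 1*ω^57 + (-1)*ω^53 + 2*ω^51 + (-3)*ω^47 + 3*ω^45 + (-1)*ω^43 + (-3)*ω^41 + 6*ω^39 + (-6)*ω^37 + 4*ω^35 + (-3)*ω^31 + 3*ω^29 + (-1)*ω^27 + (-1)*ω^25 + 2*ω^23 + (-2)*ω^19 + 2*ω^17 + (-2)*ω^15 + 1*ω^13 + 2*ω^11 + (-3)*ω^9 + 2*ω^7 + (-2)*ω^5 + 1*ω^3) * hS + ((-1)*ω^43 + 2*ω^41 + (-2)*ω^39 + 2*ω^37 + (-1)*ω^35 + (-1)*ω^33 + 2*ω^31 + (-1)*ω^29 + 1*ω^19 + (-2)*ω^17 + 1*ω^15 + 1*ω^13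 + (-2)*ω^11 + 2*ω^9 + (-2)*ω^7 + 1*ω^5) * hT + ((-1)*ω^105 + 1*ω^51 + (-1)*ω^47 + (-1)*ω^45 + 1*ω^43 + 1*ω^13 + (-1)*ω^5 + 1*ω^3) * h1
  refine ⟨p, ?_, ?_, ?_⟩
  · -- line A0 A4
    have hwne : ω ^ 8 - ω ^ 0 ≠ 0 := fun h => hne 8 (by norm_num) (by norm_num)
      (by linear_combination h)
    have heq : (starRingEnd ℂ) (p - ω ^ 0) * (ω ^ 8 - ω ^ 0)
        = (p - ω ^ 0) * (starRingEnd ℂ) (ω ^ 8 - ω ^ 0) := by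
      rw [map_sub, map_sub, hcp, hcj 8 52 (by norm_num), hcj 0 60 (by norm_num), h1, hsub, hsub,
        div_mul_eq_mul_div, div_mul_eq_mul_div]
      rw [div_eq_div_iff hd hd]
      linear_combination (ω + ω ^ 59) * key04
    obtain ⟨t, ht⟩ := line_aux (p - ω ^ 0) (ω ^ 8 - ω ^ 0) hwne heq
    refine ⟨t, ?_⟩
    rw [hA0, hA4, Complex.real_smul]
    linear_combination ht
  · -- line A1 A5
    have hwne : ω ^ 10 - ω ^ 2 ≠ 0 := by
      intro h
      apply hne 8 (by norm_num) (by norm_num)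
      have h' : ω ^ 2 * ω ^ 8 = ω ^ 2 * 1 := by linear_combination h
      exact mul_left_cancel₀ (pow_ne_zero 2 hω0) h'
    have heq : (starRingEnd ℂ) (p - ω ^ 2) * (ω ^ 10 - ω ^ 2)
        = (p - ω ^ 2) * (starRingEnd ℂ) (ω ^ 10 - ω ^ 2) := by
      rw [map_sub, map_sub, hcp, hcj 10 50 (by norm_num), hcj 2 58 (by norm_num), hsub, hsub,
        div_mul_eq_mul_div, div_mul_eq_mul_div, div_eq_div_iff hd hd]
      linear_combination (ω + ω ^ 59) * key15
    obtain ⟨t, ht⟩ := line_aux (p - ω ^ 2) (ω ^ 10 - ω ^ 2) hwne heq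
    refine ⟨t, ?_⟩
    rw [hA1, hA5, Complex.real_smul]
    linear_combination ht
  · -- line A3 A26
    have hwne : ω ^ 52 - ω ^ 6 ≠ 0 := by
      intro h
      apply hne 46 (by norm_num) (by norm_num)
      have h' : ω ^ 6 * ω ^ 46 = ω ^ 6 * 1 := by linear_combination h
      exact mul_left_cancel₀ (pow_ne_zero 6 hω0) h'
    have heq : (starRingEnd ℂ) (p - ω ^ 6) * (ω ^ 52 - ω ^ 6)
        = (p - ω ^ 6) * (starRingEnd ℂ) (ω ^ 52 - ω ^ 6) := by
      rw [map_sub, map_sub, hcp, hcj 52 8 (by norm_num), hcj 6 54 (by norm_num), hsub, hsub,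
        div_mul_eq_mul_div, div_mul_eq_mul_div, div_eq_div_iff hd hd]
      linear_combination (ω + ω ^ 59) * key326
    obtain ⟨t, ht⟩ := line_aux (p - ω ^ 6) (ω ^ 52 - ω ^ 6) hwne heq
    refine ⟨t, ?_⟩
    rw [hA3, hA26, Complex.real_smul]
    linear_combination ht
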